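/- Let p and q be projections on a complex Hilbert space H and suppose there is a unitary U ∈ B(H) with U − 1 compact and U p U* = q. Then p − q is a compact operator and the essential codimension [p:q] is 0. -/

import Mathlib

open ContinuousLinearMap Module

/-- A projection on a Hilbert space: a self-adjoint idempotent bounded operator. -/
def IsProjection {H : Type*} [NormedAddCommGroup H] [InnerProductSpace ℂ H]
    [CompleteSpace H] (p : H →L[ℂ] H) : Prop :=
  IsSelfAdjoint p ∧ p * p = p

/-- The essential codimension of two projections `p, q` with `p - q` compact:
`[p:q] = dim ker (p - q - 1) - dim ker (p - q + 1)`. -/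
noncomputable def essCodim {H : Type*} [NormedAddCommGroup H] [InnerProductSpace ℂ H]
    [CompleteSpace H] (p q : H →L[ℂ] H) : ℤ :=
  (finrank ℂ (LinearMap.ker ((p - q - 1 : H →L[ℂ] H) : H →ₗ[ℂ] H)) : ℤ) -
    (finrank ℂ (LinearMap.ker ((p - q + 1 : H →L[ℂ] H) : H →ₗ[ℂ] H)) : ℤ)

open Metric Filter Topology

section Core

variable {H : Type*} [NormedAddCommGroup H] [InnerProductSpace ℂ H] [CompleteSpace H]

local notation "⟪" x ", " y "⟫" => @inner ℂ _ _ x y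

/-- From a compact operator and a bounded sequence, extract a convergent subsequence of images. -/
lemma compact_subseq {K : H →L[ℂ] H} (hK : IsCompactOperator ⇑K) (x : ℕ → H)
    (hx : ∀ n, ‖x n‖ ≤ 1) :
    ∃ a : H, ∃ φ : ℕ → ℕ, StrictMono φ ∧ Tendsto (fun n => K (x (φ n))) atTop (𝓝 a) := by
  have hK' : IsCompactOperator ⇑(K : H →ₗ[ℂ] H) := by rwa [ContinuousLinearMap.coe_coe]
  obtain ⟨C, hC, hsub⟩ := hK'.image_closedBall_subset_compact 1
  have hmem : ∀ n, K (x n) ∈ C := fun n =>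
    hsub ⟨x n, by simpa [Metric.mem_closedBall, dist_zero_right] using hx n, rfl⟩
  obtain ⟨a, -, φ, hφ, hconv⟩ := hC.tendsto_subseq hmem
  exact ⟨a, φ, hφ, hconv⟩

/-- An injective operator of the form `1 + compact` is bounded below. -/
lemma bounded_below {K : H →L[ℂ] H} (hK : IsCompactOperator ⇑K)
    (hinj : Function.Injective ⇑(1 + K)) :
    ∃ c : ℝ, 0 < c ∧ ∀ x : H, c * ‖x‖ ≤ ‖(1 + K) x‖ := by
  by_contra h
  push_neg at h
  have hseq : ∀ n : ℕ, ∃ u : H, ‖u‖ = 1 ∧ ‖(1 + K) u‖ < 1 / (n + 1) := by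
    intro n
    obtain ⟨x, hx⟩ := h (1 / ((n : ℝ) + 1)) (by positivity)
    have hx0 : x ≠ 0 := by
      rintro rfl
      simp at hx
    have hxpos : (0:ℝ) < ‖x‖ := norm_pos_iff.mpr hx0
    refine ⟨((‖x‖⁻¹ : ℝ) : ℂ) • x, ?_, ?_⟩
    · rw [norm_smul]
      simp [inv_mul_cancel₀ (norm_ne_zero_iff.mpr hx0)]
    · rw [map_smul, norm_smul]
      have hnc : ‖((‖x‖⁻¹ : ℝ) : ℂ)‖ = ‖x‖⁻¹ := by
        simp
      rw [hnc]
      calc ‖x‖⁻¹ * ‖(1 + K) x‖ < ‖x‖⁻¹ * (1 / ((n:ℝ) + 1) * ‖x‖) := by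
            apply mul_lt_mul_of_pos_left hx (by positivity)
        _ = 1 / ((n:ℝ) + 1) := by field_simp
  choose u hu1 hu2 using hseq
  obtain ⟨a, φ, hφ, hconv⟩ := compact_subseq hK u (fun n => (hu1 n).le)
  have hT0 : Tendsto (fun n => (1 + K) (u (φ n))) atTop (𝓝 0) := by
    rw [tendsto_zero_iff_norm_tendsto_zero]
    apply squeeze_zero (fun n => norm_nonneg _) (fun n => ?_)
      (f := fun n => ‖(1 + K) (u (φ n))‖) (g := fun n => 1 / ((n:ℝ) + 1))
    · exact tendsto_one_div_add_atTop_nhds_zero_nat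
    · calc ‖(1 + K) (u (φ n))‖ ≤ 1 / ((φ n : ℝ) + 1) := (hu2 (φ n)).le
        _ ≤ 1 / ((n : ℝ) + 1) := by
            apply one_div_le_one_div_of_le (by positivity)
            have h1 : (n:ℝ) ≤ (φ n : ℝ) := Nat.cast_le.mpr hφ.le_apply
            linarith
  have hu : Tendsto (fun n => u (φ n)) atTop (𝓝 (-a)) := by
    have heq : (fun n => u (φ n)) = fun n => (1 + K) (u (φ n)) - K (u (φ n)) := by
      funext n; simp [ContinuousLinearMap.add_apply]
    rw [heq]
    simpa using hT0.sub hconv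
  have hna : ‖(-a : H)‖ = 1 := by
    have h1 : Tendsto (fun n => ‖u (φ n)‖) atTop (𝓝 ‖(-a:H)‖) := hu.norm
    have h2 : Tendsto (fun n => ‖u (φ n)‖) atTop (𝓝 1) := by
      simpa [hu1] using tendsto_const_nhds (x := (1:ℝ)) (f := atTop (α := ℕ))
    exact tendsto_nhds_unique h1 h2
  have hTa : (1 + K) (-a) = 0 := by
    have h1 : Tendsto (fun n => (1 + K) (u (φ n))) atTop (𝓝 ((1 + K) (-a))) :=
      ((1 + K).continuous.tendsto _).comp hu
    exact tendsto_nhds_unique h1 hT0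
  have : (-a : H) = 0 := hinj (by simpa using hTa)
  rw [this] at hna
  simp at hna

/-- The range of an injective `1 + compact` is closed. -/
lemma closed_range {K : H →L[ℂ] H} (hK : IsCompactOperator ⇑K)
    (hinj : Function.Injective ⇑(1 + K)) :
    IsClosed (Set.range ⇑(1 + K)) := by
  obtain ⟨c, hc, hbb⟩ := bounded_below hK hinj
  have : AntilipschitzWith (⟨c, hc.le⟩ : NNReal)⁻¹ ⇑(1 + K) := by
    apply ContinuousLinearMap.antilipschitz_of_bound
    intro x
    have h2 : (((⟨c, hc.le⟩ : NNReal)⁻¹ : NNReal) : ℝ) = c⁻¹ := NNReal.coe_inv _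
    rw [h2, inv_mul_eq_div, le_div_iff₀ hc]
    nlinarith [hbb x]
  exact this.isClosed_range (1 + K).uniformContinuous

/-- powers of `1 + compact` are `1 + compact`. -/
lemma pow_one_add_compact {K : H →L[ℂ] H} (hK : IsCompactOperator ⇑K) (n : ℕ) :
    IsCompactOperator ⇑((1 + K) ^ n - 1) := by
  induction n with
  | zero => simpa using isCompactOperator_zero
  | succ n ih =>
    have halg : (1 + K) ^ (n + 1) - 1 = (1 + K) * ((1 + K) ^ n - 1) + K := by
      rw [pow_succ']; noncomm_ring
    have h1 : IsCompactOperator (⇑(1 + K) ∘ ⇑((1 + K) ^ n - 1)) := ih.clm_comp (1 + K)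
    have h2 := h1.add hK
    have heq : ⇑((1 + K) ^ (n + 1) - 1) =
        (⇑(1 + K) ∘ ⇑((1 + K) ^ n - 1)) + ⇑K := by
      funext x
      simp only [halg, ContinuousLinearMap.add_apply, ContinuousLinearMap.mul_apply,
        Pi.add_apply, Function.comp_apply]
    rwa [heq]

/-- Riesz–Schauder: an injective operator `1 + compact` is surjective. -/
lemma surj_of_inj {K : H →L[ℂ] H} (hK : IsCompactOperator ⇑K)
    (hinj : Function.Injective ⇑(1 + K)) : Function.Surjective ⇑(1 + K) := by
  set T : H →L[ℂ] H := 1 + K with hT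
  by_contra hns
  rw [Function.Surjective] at hns
  push_neg at hns
  obtain ⟨h0, hh0⟩ := hns
  -- powers are injective
  have hpow_apply : ∀ n (x : H), (T ^ (n+1)) x = (T ^ n) (T x) := by
    intro n x
    rw [pow_succ]
    simp [ContinuousLinearMap.mul_apply]
  have hinjn : ∀ n, Function.Injective ⇑(T ^ n) := by
    intro n
    induction n with
    | zero => simpa using Function.injective_id
    | succ n ih =>
      intro x y hxy
      rw [hpow_apply, hpow_apply] at hxy
      exact hinj (ih hxy)
  -- the ranges
  set R : ℕ → Submodule ℂ H := fun n => LinearMap.range ((T ^ n : H →L[ℂ] H) : H →ₗ[ℂ] H) with hR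
  have hTn_comp : ∀ n, IsCompactOperator ⇑(T ^ n - 1 : H →L[ℂ] H) := pow_one_add_compact hK
  have hclosed : ∀ n, IsClosed ((R n : Submodule ℂ H) : Set H) := by
    intro n
    have h1 : (1 : H →L[ℂ] H) + (T ^ n - 1) = T ^ n := by abel
    have h2 : Function.Injective ⇑((1 : H →L[ℂ] H) + (T ^ n - 1)) := by
      rw [h1]; exact hinjn n
    have := closed_range (hTn_comp n) h2
    rw [h1] at this
    have hco : ((R n : Submodule ℂ H) : Set H) = Set.range ⇑(T ^ n) := by
      simp only [hR, LinearMap.coe_range, ContinuousLinearMap.coe_coe]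
    rwa [hco]
  have hmono : ∀ n, R (n+1) ≤ R n := by
    intro n x hx
    obtain ⟨y, hy⟩ := hx
    exact ⟨T y, by rw [← hy]; simp only [ContinuousLinearMap.coe_coe]; rw [hpow_apply]⟩
  have hle : ∀ {n m}, n ≤ m → R m ≤ R n := by
    intro n m h
    induction h with
    | refl => exact le_rfl
    | step h ih => exact le_trans (hmono _) ih
  have hpow_apply' : ∀ n (x : H), (T ^ (n+1)) x = T ((T ^ n) x) := by
    intro n x
    rw [pow_succ']
    simp [ContinuousLinearMap.mul_apply]
  have hTmaps : ∀ n (x : H), x ∈ R n → T x ∈ R (n+1) := by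
    intro n x hx
    obtain ⟨y, hy⟩ := hx
    refine ⟨y, ?_⟩
    simp only [ContinuousLinearMap.coe_coe] at hy ⊢
    rw [hpow_apply', hy]
  -- strict descent
  have hstrict : ∀ n, ∃ v, v ∈ R n ∧ v ∉ R (n+1) := by
    intro n
    refine ⟨(T ^ n) h0, ⟨h0, rfl⟩, ?_⟩
    rintro ⟨g, hg⟩
    rw [ContinuousLinearMap.coe_coe, hpow_apply] at hg
    exact hh0 g (hinjn n hg)
  -- orthonormal-ish sequence
  have hxseq : ∀ n, ∃ x : H, x ∈ R n ∧ x ∈ (R (n+1))ᗮ ∧ ‖x‖ = 1 := by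
    intro n
    obtain ⟨v, hv, hv'⟩ := hstrict n
    haveI : CompleteSpace (R (n+1)) := (hclosed (n+1)).completeSpace_coe
    set w := v - (Submodule.orthogonalProjection (R (n+1)) v : H) with hw
    have hw1 : w ∈ R n := sub_mem hv (hmono n (Submodule.orthogonalProjection (R (n+1)) v).2)
    have hw2 : w ∈ (R (n+1))ᗮ := Submodule.sub_starProjection_mem_orthogonal (K := R (n+1)) v
    have hw0 : w ≠ 0 := by
      intro h
      apply hv'
      have : (Submodule.orthogonalProjection (R (n+1)) v : H) = v := by
        rw [hw] at h
        linear_combination (norm := abel) -h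
      rw [← this]
      exact (Submodule.orthogonalProjection (R (n+1)) v).2
    have hwpos : (0:ℝ) < ‖w‖ := norm_pos_iff.mpr hw0
    refine ⟨((‖w‖⁻¹ : ℝ) : ℂ) • w, ?_, ?_, ?_⟩
    · exact Submodule.smul_mem _ _ hw1
    · exact Submodule.smul_mem _ _ hw2
    · rw [norm_smul]
      simp [inv_mul_cancel₀ (norm_ne_zero_iff.mpr hw0)]
  choose x hx1 hx2 hx3 using hxseq
  -- separation
  have hsep : ∀ n m, n < m → 1 ≤ ‖K (x n) - K (x m)‖ := by
    intro n m hnm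
    have hKx : ∀ k, K (x k) = T (x k) - x k := by
      intro k; simp [hT, ContinuousLinearMap.add_apply]
    have hv : T (x n) - T (x m) + x m ∈ R (n+1) := by
      apply Submodule.add_mem
      · exact Submodule.sub_mem _ (hTmaps n _ (hx1 n))
          (hle (by omega : n+1 ≤ m+1) (hTmaps m _ (hx1 m)))
      · exact hle (by omega : n+1 ≤ m) (hx1 m)
    have horth : ⟪T (x n) - T (x m) + x m, x n⟫ = 0 :=
      (Submodule.mem_orthogonal _ _).mp (hx2 n) _ hv
    have hdiff : K (x n) - K (x m) = (T (x n) - T (x m) + x m) - x n := by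
      rw [hKx, hKx]; abel
    rw [hdiff]
    have hsq := @norm_sub_sq ℂ _ _ _ _ (T (x n) - T (x m) + x m) (x n)
    have hre : RCLike.re (⟪T (x n) - T (x m) + x m, x n⟫) = 0 := by
      rw [horth]; simp
    have h1 : ‖(T (x n) - T (x m) + x m) - x n‖ ^ 2
        = ‖T (x n) - T (x m) + x m‖ ^ 2 + 1 := by
      rw [hsq, hre, hx3 n]; ring
    nlinarith [norm_nonneg ((T (x n) - T (x m) + x m) - x n),
      norm_nonneg (T (x n) - T (x m) + x m)]
  -- contradiction with compactness
  obtain ⟨a, φ, hφ, hconv⟩ := compact_subseq hK x (fun n => (hx3 n).le)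
  have hcauchy : CauchySeq (fun n => K (x (φ n))) := hconv.cauchySeq
  rw [Metric.cauchySeq_iff] at hcauchy
  obtain ⟨N, hN⟩ := hcauchy 1 one_pos
  have h1 := hN (N+1) (by omega) N (by omega)
  rw [dist_eq_norm] at h1
  have h2 := hsep (φ N) (φ (N+1)) (hφ (by omega))
  rw [norm_sub_rev] at h1
  linarith

/-- The kernel of `1 + compact` is finite dimensional. -/
lemma finiteDim_ker {K : H →L[ℂ] H} (hK : IsCompactOperator ⇑K) :
    FiniteDimensional ℂ (LinearMap.ker ((1 + K : H →L[ℂ] H) : H →ₗ[ℂ] H)) := by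
  set N : Submodule ℂ H := LinearMap.ker ((1 + K : H →L[ℂ] H) : H →ₗ[ℂ] H) with hN
  have hfix : ∀ x ∈ N, x = -(K x) := by
    intro x hx
    have : x + K x = 0 := by
      simpa [ContinuousLinearMap.add_apply] using (LinearMap.mem_ker.mp hx)
    linear_combination (norm := abel) this
  have hK' : IsCompactOperator ⇑(K : H →ₗ[ℂ] H) := by rwa [ContinuousLinearMap.coe_coe]
  obtain ⟨C, hC, hsub⟩ := hK'.image_closedBall_subset_compact 1
  have hNclosed : IsClosed (N : Set H) := isClosed_ker (1 + K)
  set S : Set H := (N : Set H) ∩ Metric.closedBall 0 1 with hS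
  have hSC : S ⊆ -C := by
    rintro y ⟨hy1, hy2⟩
    have : K y ∈ C := hsub ⟨y, hy2, rfl⟩
    rw [Set.mem_neg]
    rw [hfix y hy1]
    simpa using this
  have hScompact : IsCompact S := by
    apply IsCompact.of_isClosed_subset hC.neg (hNclosed.inter Metric.isClosed_closedBall) hSC
  have hball : IsCompact (Metric.closedBall (0 : N) 1) := by
    rw [Topology.IsEmbedding.isCompact_iff (Topology.IsEmbedding.subtypeVal)]
    have himg : Subtype.val '' Metric.closedBall (0 : N) 1 = S := by
      ext y
      constructor
      · rintro ⟨⟨z, hz⟩, hb, rfl⟩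
        refine ⟨hz, ?_⟩
        simpa [Metric.mem_closedBall, dist_zero_right] using
          (by simpa [Metric.mem_closedBall, dist_zero_right] using hb : ‖(⟨z, hz⟩ : N)‖ ≤ 1)
      · rintro ⟨hy1, hy2⟩
        refine ⟨⟨y, hy1⟩, ?_, rfl⟩
        simpa [Metric.mem_closedBall, dist_zero_right] using
          (by simpa [Metric.mem_closedBall, dist_zero_right] using hy2 : ‖y‖ ≤ 1)
    rwa [himg]
  exact FiniteDimensional.of_isCompact_closedBall₀ ℂ one_pos hball

/-- A continuous linear map into a finite dimensional subspace is compact. -/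
lemma compact_into_fd {V : Submodule ℂ H} [FiniteDimensional ℂ V] (G : H →L[ℂ] V) :
    IsCompactOperator ⇑(V.subtypeL.comp G) := by
  haveI : ProperSpace V := FiniteDimensional.proper ℂ V
  refine ⟨Subtype.val '' Metric.closedBall (0:V) ‖G‖, (isCompact_closedBall (0:V) ‖G‖).image
    continuous_subtype_val, ?_⟩
  have hsub : Metric.ball (0:H) 1 ⊆ ⇑(V.subtypeL.comp G) ⁻¹'
      (Subtype.val '' Metric.closedBall (0:V) ‖G‖) := by
    intro x hx
    refine ⟨G x, ?_, rfl⟩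
    rw [Metric.mem_closedBall, dist_zero_right]
    calc ‖G x‖ ≤ ‖G‖ * ‖x‖ := G.le_opNorm x
      _ ≤ ‖G‖ * 1 := by
          apply mul_le_mul_of_nonneg_left _ (norm_nonneg G)
          have := hx
          rw [Metric.mem_ball, dist_zero_right] at this
          exact this.le
      _ = ‖G‖ := mul_one _
  exact Filter.mem_of_superset (Metric.ball_mem_nhds 0 one_pos) hsub

/-- One half of the index-zero statement. -/
lemma ker_le {K : H →L[ℂ] H} (hK : IsCompactOperator ⇑K)
    (hK' : IsCompactOperator ⇑(ContinuousLinearMap.adjoint K)) :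
    finrank ℂ (LinearMap.ker ((1 + ContinuousLinearMap.adjoint K : H →L[ℂ] H) : H →ₗ[ℂ] H)) ≤
      finrank ℂ (LinearMap.ker ((1 + K : H →L[ℂ] H) : H →ₗ[ℂ] H)) := by
  set T : H →L[ℂ] H := 1 + K with hT
  have hadj : ContinuousLinearMap.adjoint T = 1 + ContinuousLinearMap.adjoint K := by
    rw [hT, map_add]
    congr 1
    rw [← ContinuousLinearMap.star_eq_adjoint, star_one]
  set N : Submodule ℂ H := LinearMap.ker (T : H →ₗ[ℂ] H) with hN
  set N' : Submodule ℂ H := LinearMap.ker ((1 + ContinuousLinearMap.adjoint K : H →L[ℂ] H) : H →ₗ[ℂ] H) with hN'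
  haveI hfdN : FiniteDimensional ℂ N := finiteDim_ker hK
  haveI hfdN' : FiniteDimensional ℂ N' := finiteDim_ker hK'
  by_contra hlt
  push_neg at hlt
  -- an injective, non-surjective linear map j : N →ₗ N'
  set d := finrank ℂ N with hd
  let c := finBasis ℂ N'
  let cs : Fin d → N' := fun i => c (Fin.castLE hlt.le i)
  have hcs : LinearIndependent ℂ cs :=
    c.linearIndependent.comp _ (Fin.castLE_injective hlt.le)
  set W : Submodule ℂ N' := Submodule.span ℂ (Set.range cs) with hW
  have hWrank : finrank ℂ W = d := by
    rw [hW, finrank_span_eq_card hcs, Fintype.card_fin]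
  obtain ⟨e⟩ := FiniteDimensional.nonempty_linearEquiv_of_finrank_eq
    (show finrank ℂ N = finrank ℂ W by rw [hWrank])
  set j : N →ₗ[ℂ] N' := W.subtype.comp e.toLinearMap with hj
  have hjinj : Function.Injective j := W.injective_subtype.comp e.injective
  -- build the finite rank perturbation F
  haveI : CompleteSpace N := FiniteDimensional.complete ℂ N
  set P := Submodule.orthogonalProjection N with hP
  set G : H →L[ℂ] N' := (LinearMap.toContinuousLinearMap j).comp P with hG
  set F : H →L[ℂ] H := N'.subtypeL.comp G with hF
  have hFc : IsCompactOperator ⇑F := compact_into_fd G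
  have hFval : ∀ x : H, F x = (j (P x) : H) := fun x => rfl
  have hFmem : ∀ x : H, F x ∈ N' := fun x => (j (P x)).2
  -- key : if T x ∈ N' then T x = 0
  have hTN' : ∀ x : H, T x ∈ N' → T x = 0 := by
    intro x hx
    have hx' : ContinuousLinearMap.adjoint T (T x) = 0 := by
      have := LinearMap.mem_ker.mp hx
      rw [hadj]
      simpa using this
    have : ⟪T x, T x⟫ = 0 := by
      rw [← ContinuousLinearMap.adjoint_inner_left T x (T x), hx', inner_zero_left]
    exact inner_self_eq_zero.mp this
  -- T + F is injective
  have halg : (1 : H →L[ℂ] H) + (K + F) = T + F := by rw [hT]; abel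
  have hker0 : ∀ z : H, (T + F) z = 0 → z = 0 := by
    intro z hz
    have hz' : T z + F z = 0 := by simpa [ContinuousLinearMap.add_apply] using hz
    have hTz : T z ∈ N' := by
      have h3 : T z = -(F z) := by linear_combination (norm := abel) hz'
      rw [h3]
      exact neg_mem (hFmem z)
    have hTz0 : T z = 0 := hTN' z hTz
    have hFz0 : F z = 0 := by rw [hTz0] at hz'; simpa using hz'
    have hzN : z ∈ N := LinearMap.mem_ker.mpr hTz0
    have hPz : (P z : H) = z := Submodule.starProjection_eq_self_iff.mpr hzN
    have h4 : (j (P z) : H) = 0 := by rw [← hFval]; exact hFz0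
    have hj0 : j (P z) = 0 := ZeroMemClass.coe_eq_zero.mp h4
    have h5 : P z = 0 := hjinj (by rw [hj0, map_zero])
    rw [← hPz, h5, ZeroMemClass.coe_zero]
  have hTFinj : Function.Injective ⇑(1 + (K + F)) := by
    rw [halg]
    intro a b hab
    have := hker0 (a - b) (by rw [map_sub, hab, sub_self])
    exact sub_eq_zero.mp this
  have hKF : IsCompactOperator ⇑(K + F) := by
    have h7 : ⇑(K + F) = ⇑K + ⇑F := by
      funext x
      simp [ContinuousLinearMap.add_apply, Pi.add_apply]
    rw [h7]
    exact hK.add hFc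
  have hsurj := surj_of_inj hKF hTFinj
  -- pick y ∈ N' not in the range of j
  have hyex : ∃ y : N', ∀ u : N, j u ≠ y := by
    by_contra hy
    push_neg at hy
    have hjsurj : Function.Surjective ⇑j := fun y => hy y
    have h1 := LinearMap.finrank_range_le j
    rw [LinearMap.range_eq_top.mpr hjsurj, finrank_top] at h1
    rw [← hd] at h1
    omega
  obtain ⟨y, hy⟩ := hyex
  obtain ⟨x, hx⟩ := hsurj (y : H)
  rw [halg] at hx
  have hx' : T x + F x = (y : H) := by
    simpa [ContinuousLinearMap.add_apply] using hx
  have hTx : T x ∈ N' := by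
    have h7 : T x = (y : H) - F x := by linear_combination (norm := abel) hx'
    rw [h7]
    exact sub_mem y.2 (hFmem x)
  have hTx0 : T x = 0 := hTN' x hTx
  have hxN : x ∈ N := LinearMap.mem_ker.mpr hTx0
  have hPx : (P x : H) = x := Submodule.starProjection_eq_self_iff.mpr hxN
  have h8 : (j (P x) : H) = (y : H) := by
    rw [← hFval]
    rw [hTx0] at hx'
    simpa using hx'
  exact hy (P x) (Subtype.ext h8)

/-- Index zero: the kernels of `1 + K` and `1 + K*` have the same dimension. -/
lemma ker_finrank_eq {K : H →L[ℂ] H} (hK : IsCompactOperator ⇑K)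
    (hK' : IsCompactOperator ⇑(ContinuousLinearMap.adjoint K)) :
    finrank ℂ (LinearMap.ker ((1 + K : H →L[ℂ] H) : H →ₗ[ℂ] H)) =
      finrank ℂ (LinearMap.ker ((1 + ContinuousLinearMap.adjoint K : H →L[ℂ] H) : H →ₗ[ℂ] H)) := by
  refine le_antisymm ?_ (ker_le hK hK')
  have h1 := ker_le (K := ContinuousLinearMap.adjoint K) hK'
    (by rwa [ContinuousLinearMap.adjoint_adjoint])
  rwa [ContinuousLinearMap.adjoint_adjoint] at h1

end Core

section Application

variable {H : Type*} [NormedAddCommGroup H] [InnerProductSpace ℂ H] [CompleteSpace H]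

local notation "⟪" x ", " y "⟫" => @inner ℂ _ _ x y

lemma proj_key {r : H →L[ℂ] H} (hr : IsProjection r) (y : H) :
    ⟪r y, y⟫ = ⟪r y, r y⟫ := by
  obtain ⟨hrs, hri⟩ := hr
  have hra := ContinuousLinearMap.isSelfAdjoint_iff'.mp hrs
  have hidem : r (r y) = r y := by
    have := congrArg (fun A : H →L[ℂ] H => A y) hri
    simpa [ContinuousLinearMap.mul_apply] using this
  calc ⟪r y, y⟫ = ⟪r (r y), y⟫ := by rw [hidem]
    _ = ⟪ContinuousLinearMap.adjoint r (r y), y⟫ := by rw [hra]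
    _ = ⟪r y, r y⟫ := ContinuousLinearMap.adjoint_inner_left r y (r y)

lemma proj_diff_eigen {p q : H →L[ℂ] H} (hp : IsProjection p) (hq : IsProjection q)
    {x : H} (h : p x - q x = x) : p x = x ∧ q x = 0 := by
  have h1 : ⟪p x, x⟫ - ⟪q x, x⟫ = ⟪x, x⟫ := by rw [← inner_sub_left, h]
  rw [proj_key hp x, proj_key hq x] at h1
  have h2 : ‖p x‖^2 - ‖q x‖^2 = ‖x‖^2 := by
    have h1re := congrArg RCLike.re h1
    simp only [map_sub] at h1re
    rwa [inner_self_eq_norm_sq, inner_self_eq_norm_sq, inner_self_eq_norm_sq] at h1re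
  have horth : ⟪p x, x - p x⟫ = 0 := by
    rw [inner_sub_right, proj_key hp x, sub_self]
  have hpyth := @norm_add_sq ℂ _ _ _ _ (p x) (x - p x)
  have hsum : p x + (x - p x) = x := by abel
  rw [hsum, horth] at hpyth
  simp only [map_zero, mul_zero, add_zero, zero_add, mul_comm] at hpyth
  have hq0 : ‖q x‖ = 0 ∧ ‖x - p x‖ = 0 := by
    constructor <;> nlinarith [norm_nonneg (q x), norm_nonneg (x - p x)]
  refine ⟨?_, norm_eq_zero.mp hq0.1⟩
  have h3 := sub_eq_zero.mp (norm_eq_zero.mp hq0.2)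
  exact h3.symm

end Application

/-- If `U` is a unitary with `U - 1` compact and `U p U* = q`, then `p - q` is compact
and the essential codimension `[p:q]` is `0`. -/
theorem essCodim_eq_zero_of_unitary {H : Type*} [NormedAddCommGroup H]
    [InnerProductSpace ℂ H] [CompleteSpace H] (p q U : H →L[ℂ] H)
    (hp : IsProjection p) (hq : IsProjection q)
    (hU₁ : adjoint U * U = 1) (hU₂ : U * adjoint U = 1)
    (hUK : IsCompactOperator (⇑(U - 1)))
    (hconj : U * p * adjoint U = q) :
    IsCompactOperator (⇑(p - q)) ∧ essCodim p q = 0 := by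
  obtain ⟨hps, hpi⟩ := hp
  have hpp : ∀ y, p (p y) = p y := fun y => by
    have := congrArg (fun A : H →L[ℂ] H => A y) hpi
    simpa [ContinuousLinearMap.mul_apply] using this
  have hUU : ∀ x, adjoint U (U x) = x := fun x => by
    have := congrArg (fun A : H →L[ℂ] H => A x) hU₁
    simpa [ContinuousLinearMap.mul_apply] using this
  have hUU' : ∀ x, U (adjoint U x) = x := fun x => by
    have := congrArg (fun A : H →L[ℂ] H => A x) hU₂
    simpa [ContinuousLinearMap.mul_apply] using this
  have hqx : ∀ x, q x = U (p (adjoint U x)) := fun x => by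
    have h := congrArg (fun A : H →L[ℂ] H => A x) hconj
    simp only [ContinuousLinearMap.mul_apply] at h
    exact h.symm
  -- auxiliary compactness facts
  have h1U : IsCompactOperator ⇑(1 - U) := by
    have h := hUK.neg
    have heq : ⇑(1 - U) = -⇑(U - 1) := by
      funext x
      simp only [ContinuousLinearMap.sub_apply, ContinuousLinearMap.one_apply, Pi.neg_apply]
      abel
    rwa [heq]
  have hUs : IsCompactOperator ⇑(adjoint U - 1) := by
    have h2 := h1U.clm_comp (adjoint U)
    have heq : ⇑(adjoint U - 1) = ⇑(adjoint U) ∘ ⇑(1 - U) := by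
      funext x
      simp only [ContinuousLinearMap.sub_apply, ContinuousLinearMap.one_apply,
        Function.comp_apply, map_sub, hUU x]
    rwa [heq]
  -- compactness of p - q
  have hpq : IsCompactOperator ⇑(p - q) := by
    have h1 : IsCompactOperator (⇑(U - 1) ∘ ⇑(p * adjoint U)) := hUK.comp_clm _
    have h2 : IsCompactOperator (⇑p ∘ ⇑(adjoint U - 1)) := hUs.clm_comp p
    have h3 := (h1.add h2).neg
    have heq : ⇑(p - q) = -((⇑(U - 1) ∘ ⇑(p * adjoint U)) +
        (⇑p ∘ ⇑(adjoint U - 1))) := by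
      funext x
      simp only [ContinuousLinearMap.sub_apply, Pi.neg_apply, Pi.add_apply,
        Function.comp_apply, ContinuousLinearMap.mul_apply, ContinuousLinearMap.one_apply,
        map_sub, hqx x]
      abel
    rwa [heq]
  -- the operator K₀
  set K₀ : H →L[ℂ] H := p * (U - 1) * p with hK₀def
  have hK₀ : IsCompactOperator ⇑K₀ := by
    have h1 := (hUK.comp_clm p).clm_comp p
    have heq : ⇑K₀ = ⇑p ∘ (⇑(U - 1) ∘ ⇑p) := by
      funext x
      simp [hK₀def, ContinuousLinearMap.mul_apply]
    rwa [heq]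
  have hK₀a : ContinuousLinearMap.adjoint K₀ = p * (adjoint U - 1) * p := by
    simp only [← ContinuousLinearMap.star_eq_adjoint, hK₀def]
    simp [star_mul, star_sub, star_one, hps.star_eq, mul_assoc]
  have hK₀a' : IsCompactOperator ⇑(ContinuousLinearMap.adjoint K₀) := by
    rw [hK₀a]
    have h1 := (hUs.comp_clm p).clm_comp p
    have heq : ⇑(p * (adjoint U - 1) * p) = ⇑p ∘ (⇑(adjoint U - 1) ∘ ⇑p) := by
      funext x
      simp [ContinuousLinearMap.mul_apply]
    rwa [heq]
  -- kernel characterizations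
  have hchar : ∀ (W : H →L[ℂ] H) (x : H),
      (1 + (p * (W - 1) * p)) x = 0 ↔ (p x = x ∧ p (W x) = 0) := by
    intro W x
    have happ : (1 + (p * (W - 1) * p)) x = x + (p (W (p x)) - p (p x)) := by
      simp [ContinuousLinearMap.add_apply, ContinuousLinearMap.mul_apply,
        ContinuousLinearMap.sub_apply, map_sub]
    rw [happ, hpp]
    constructor
    · intro hx
      have hpx : p x + (p (p (W (p x))) - p (p x)) = 0 := by
        have := congrArg (⇑p) hx
        simpa [map_add, map_sub, map_zero] using this
      rw [hpp, hpp] at hpx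
      have hW0 : p (W (p x)) = 0 := by linear_combination (norm := abel) hpx
      have hxx : p x = x := by
        rw [hW0] at hx
        have h5 : x - p x = 0 := by linear_combination (norm := abel) hx
        exact (sub_eq_zero.mp h5).symm
      exact ⟨hxx, by rwa [hxx] at hW0⟩
    · rintro ⟨h1, h2⟩
      rw [h1, h2]
      simp
  -- ker (p - q - 1) = ker (1 + adjoint K₀)
  have hEker : LinearMap.ker ((p - q - 1 : H →L[ℂ] H) : H →ₗ[ℂ] H) = LinearMap.ker ((1 + ContinuousLinearMap.adjoint K₀ : H →L[ℂ] H) : H →ₗ[ℂ] H) := by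
    ext x
    rw [LinearMap.mem_ker, LinearMap.mem_ker, ContinuousLinearMap.coe_coe, ContinuousLinearMap.coe_coe, hK₀a, hchar (adjoint U) x]
    constructor
    · intro hx
      have hx' : p x - q x = x := by
        have h5 : p x - q x - x = 0 := by
          simpa [ContinuousLinearMap.sub_apply, ContinuousLinearMap.one_apply] using hx
        linear_combination (norm := abel) h5
      obtain ⟨h1, h2⟩ := proj_diff_eigen ⟨hps, hpi⟩ hq hx'
      refine ⟨h1, ?_⟩
      have h3 : U (p (adjoint U x)) = 0 := by rw [← hqx x]; exact h2
      have h4 := congrArg (⇑(adjoint U)) h3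
      simpa [hUU] using h4
    · rintro ⟨h1, h2⟩
      have hq0 : q x = 0 := by rw [hqx x, h2, map_zero]
      simp [ContinuousLinearMap.sub_apply, ContinuousLinearMap.one_apply, hq0, h1]
  -- characterization of ker (p - q + 1)
  have hker2 : ∀ x : H, (p - q + 1) x = 0 ↔ (q x = x ∧ p x = 0) := by
    intro x
    constructor
    · intro hx
      have hx' : q x - p x = x := by
        have h5 : p x - q x + x = 0 := by
          simpa [ContinuousLinearMap.sub_apply, ContinuousLinearMap.add_apply,
            ContinuousLinearMap.one_apply] using hx
        linear_combination (norm := abel) -h5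
      exact proj_diff_eigen hq ⟨hps, hpi⟩ hx'
    · rintro ⟨h1, h2⟩
      simp [ContinuousLinearMap.sub_apply, ContinuousLinearMap.add_apply,
        ContinuousLinearMap.one_apply, h1, h2]
  -- the unitary equivalence between the kernels
  have hmemU : ∀ x : H, (1 + K₀) x = 0 → (p - q + 1) (U x) = 0 := by
    intro x hx
    obtain ⟨h1, h2⟩ := (hchar U x).mp hx
    rw [hker2]
    refine ⟨?_, h2⟩
    rw [hqx (U x), hUU x, h1]
  have hmemU' : ∀ y : H, (p - q + 1) y = 0 → (1 + K₀) (adjoint U y) = 0 := by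
    intro y hy
    obtain ⟨h1, h2⟩ := (hker2 y).mp hy
    rw [hchar U (adjoint U y)]
    constructor
    · calc p (adjoint U y) = adjoint U (U (p (adjoint U y))) := (hUU _).symm
        _ = adjoint U (q y) := by rw [← hqx y]
        _ = adjoint U y := by rw [h1]
    · rw [hUU' y]; exact h2
  let e : (LinearMap.ker ((p - q + 1 : H →L[ℂ] H) : H →ₗ[ℂ] H)) ≃ₗ[ℂ] (LinearMap.ker ((1 + K₀ : H →L[ℂ] H) : H →ₗ[ℂ] H)) :=
    { toFun := fun y => ⟨adjoint U y.1,
        LinearMap.mem_ker.mpr (hmemU' y.1 (LinearMap.mem_ker.mp y.2))⟩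
      map_add' := fun a b => Subtype.ext (map_add (adjoint U) a.1 b.1)
      map_smul' := fun m a => Subtype.ext ((adjoint U).map_smul m a.1)
      invFun := fun x => ⟨U x.1,
        LinearMap.mem_ker.mpr (hmemU x.1 (LinearMap.mem_ker.mp x.2))⟩
      left_inv := fun y => Subtype.ext (hUU' y.1)
      right_inv := fun x => Subtype.ext (hUU x.1) }
  have hFrank : finrank ℂ (LinearMap.ker ((p - q + 1 : H →L[ℂ] H) : H →ₗ[ℂ] H)) = finrank ℂ (LinearMap.ker ((1 + K₀ : H →L[ℂ] H) : H →ₗ[ℂ] H)) :=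
    e.finrank_eq
  have hmain := ker_finrank_eq hK₀ hK₀a'
  refine ⟨hpq, ?_⟩
  unfold essCodim
  rw [hEker, hFrank, hmain]
  exact sub_self _
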